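/- Let A, B, C, D be four pairwise distinct quaternions with zero real part, regarded as points of ℝ³. Then the quaternionic cross ratio Q := (A − B)(B − C)⁻¹(C − D)(D − A)⁻¹ has zero imaginary part (i.e., is a real scalar) if and only if the four points lie on a common line or on a common circle, i.e., either A, B, C, D are collinear, or there exists a two-dimensional affine subspace of ℝ³ containing all four points together with a point c in it and a radius ρ > 0 such that each of A, B, C, D has distance ρ from c. -/

import Mathlib

open Quaternion

private lemma sq_zero_of_sum3 {x y z : ℝ} (h : x^2 + y^2 + z^2 = 0) : x = 0 := by
  have hx : x^2 = 0 := le_antisymm (by nlinarith [sq_nonneg y, sq_nonneg z]) (sq_nonneg x)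
  exact pow_eq_zero_iff two_ne_zero |>.mp hx

private lemma sq3_zero {x y z : ℝ} (h : x^2 + y^2 + z^2 = 0) : x = 0 ∧ y = 0 ∧ z = 0 :=
  ⟨sq_zero_of_sum3 h, sq_zero_of_sum3 (x := y) (y := x) (z := z) (by linarith),
    sq_zero_of_sum3 (x := z) (y := x) (z := y) (by linarith)⟩

set_option maxHeartbeats 2000000 in
/-- If the pair of difference vectors is independent (nonzero cross product), the four points
(with cross ratio conditions) lie on a circle. -/
private lemma aux_circle (A B C D : Quaternion ℝ)
    (b1 b2 b3 c1 c2 c3 d1 d2 d3 : ℝ)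
    (hA : A.re = 0) (hB : B.re = 0) (hC : C.re = 0) (hD : D.re = 0)
    (hb1 : B.imI - A.imI = b1) (hb2 : B.imJ - A.imJ = b2) (hb3 : B.imK - A.imK = b3)
    (hc1 : C.imI - A.imI = c1) (hc2 : C.imJ - A.imJ = c2) (hc3 : C.imK - A.imK = c3)
    (hd1 : D.imI - A.imI = d1) (hd2 : D.imJ - A.imJ = d2) (hd3 : D.imK - A.imK = d3)
    (hn : (b2*c3 - b3*c2)^2 + (b3*c1 - b1*c3)^2 + (b1*c2 - b2*c1)^2 ≠ 0)
    (hdet : b1*(c2*d3 - c3*d2) + b2*(c3*d1 - c1*d3) + b3*(c1*d2 - c2*d1) = 0)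
    (hV1 : (b1^2+b2^2+b3^2)*(c2*d3 - c3*d2) + (c1^2+c2^2+c3^2)*(d2*b3 - d3*b2)
        + (d1^2+d2^2+d3^2)*(b2*c3 - b3*c2) = 0)
    (hV2 : (b1^2+b2^2+b3^2)*(c3*d1 - c1*d3) + (c1^2+c2^2+c3^2)*(d3*b1 - d1*b3)
        + (d1^2+d2^2+d3^2)*(b3*c1 - b1*c3) = 0)
    (hV3 : (b1^2+b2^2+b3^2)*(c1*d2 - c2*d1) + (c1^2+c2^2+c3^2)*(d1*b2 - d2*b1)
        + (d1^2+d2^2+d3^2)*(b1*c2 - b2*c1) = 0) :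
    ∃ (P : AffineSubspace ℝ (Quaternion ℝ)) (c : Quaternion ℝ) (ρ : ℝ),
      Module.finrank ℝ P.direction = 2 ∧
      A ∈ P ∧ B ∈ P ∧ C ∈ P ∧ D ∈ P ∧ c ∈ P ∧ 0 < ρ ∧
      dist A c = ρ ∧ dist B c = ρ ∧ dist C c = ρ ∧ dist D c = ρ := by
  obtain ⟨α, hα⟩ : ∃ x : ℝ, x = ((d2*c3 - d3*c2)*(b2*c3 - b3*c2) + (d3*c1 - d1*c3)*(b3*c1 - b1*c3)
      + (d1*c2 - d2*c1)*(b1*c2 - b2*c1))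
      / ((b2*c3 - b3*c2)^2 + (b3*c1 - b1*c3)^2 + (b1*c2 - b2*c1)^2) := ⟨_, rfl⟩
  obtain ⟨β, hβ⟩ : ∃ x : ℝ, x = ((b2*d3 - b3*d2)*(b2*c3 - b3*c2) + (b3*d1 - b1*d3)*(b3*c1 - b1*c3)
      + (b1*d2 - b2*d1)*(b1*c2 - b2*c1))
      / ((b2*c3 - b3*c2)^2 + (b3*c1 - b1*c3)^2 + (b1*c2 - b2*c1)^2) := ⟨_, rfl⟩
  obtain ⟨p, hp⟩ : ∃ x : ℝ, x = ((c1^2+c2^2+c3^2)*((b1^2+b2^2+b3^2) - (b1*c1+b2*c2+b3*c3)))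
      / (2*((b2*c3 - b3*c2)^2 + (b3*c1 - b1*c3)^2 + (b1*c2 - b2*c1)^2)) := ⟨_, rfl⟩
  obtain ⟨q, hq⟩ : ∃ x : ℝ, x = ((b1^2+b2^2+b3^2)*((c1^2+c2^2+c3^2) - (b1*c1+b2*c2+b3*c3)))
      / (2*((b2*c3 - b3*c2)^2 + (b3*c1 - b1*c3)^2 + (b1*c2 - b2*c1)^2)) := ⟨_, rfl⟩
  have hd1' : d1 = α*b1 + β*c1 := by
    rw [hα, hβ, div_mul_eq_mul_div, div_mul_eq_mul_div, ← add_div, eq_div_iff hn]; linear_combination (b2*c3 - b3*c2) * hdet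
  have hd2' : d2 = α*b2 + β*c2 := by
    rw [hα, hβ, div_mul_eq_mul_div, div_mul_eq_mul_div, ← add_div, eq_div_iff hn]; linear_combination (b3*c1 - b1*c3) * hdet
  have hd3' : d3 = α*b3 + β*c3 := by
    rw [hα, hβ, div_mul_eq_mul_div, div_mul_eq_mul_div, ← add_div, eq_div_iff hn]; linear_combination (b1*c2 - b2*c1) * hdet
  obtain ⟨m1, hm1⟩ : ∃ x : ℝ, x = p*b1 + q*c1 := ⟨_, rfl⟩
  obtain ⟨m2, hm2⟩ : ∃ x : ℝ, x = p*b2 + q*c2 := ⟨_, rfl⟩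
  obtain ⟨m3, hm3⟩ : ∃ x : ℝ, x = p*b3 + q*c3 := ⟨_, rfl⟩
  have hmb : 2*(b1*m1 + b2*m2 + b3*m3) = b1^2+b2^2+b3^2 := by
    rw [hm1, hm2, hm3, hp, hq, div_eq_mul_inv, div_eq_mul_inv, mul_inv]
    have h := mul_inv_cancel₀ hn
    generalize ((b2*c3 - b3*c2)^2 + (b3*c1 - b1*c3)^2 + (b1*c2 - b2*c1)^2)⁻¹ = u at h ⊢
    linear_combination (b1^2+b2^2+b3^2) * h
  have hmc : 2*(c1*m1 + c2*m2 + c3*m3) = c1^2+c2^2+c3^2 := by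
    rw [hm1, hm2, hm3, hp, hq, div_eq_mul_inv, div_eq_mul_inv, mul_inv]
    have h := mul_inv_cancel₀ hn
    generalize ((b2*c3 - b3*c2)^2 + (b3*c1 - b1*c3)^2 + (b1*c2 - b2*c1)^2)⁻¹ = u at h ⊢
    linear_combination (c1^2+c2^2+c3^2) * h
  have hD1 : D.imI - A.imI = α*b1 + β*c1 := hd1.trans hd1'
  have hD2 : D.imJ - A.imJ = α*b2 + β*c2 := hd2.trans hd2'
  have hD3 : D.imK - A.imK = α*b3 + β*c3 := hd3.trans hd3'
  rw [hd1', hd2', hd3'] at hV1 hV2 hV3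
  have hkey : ((b2*c3 - b3*c2)^2 + (b3*c1 - b1*c3)^2 + (b1*c2 - b2*c1)^2) *
      (((α*b1+β*c1)^2 + (α*b2+β*c2)^2 + (α*b3+β*c3)^2)
        - (α*(b1^2+b2^2+b3^2) + β*(c1^2+c2^2+c3^2))) = 0 := by
    linear_combination (b2*c3 - b3*c2)*hV1 + (b3*c1 - b1*c3)*hV2 + (b1*c2 - b2*c1)*hV3
  have hdd : (α*b1+β*c1)^2 + (α*b2+β*c2)^2 + (α*b3+β*c3)^2
      = α*(b1^2+b2^2+b3^2) + β*(c1^2+c2^2+c3^2) := by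
    have h := (mul_eq_zero.mp hkey).resolve_left hn
    linarith [h]
  have hmd : 2*((α*b1+β*c1)*m1 + (α*b2+β*c2)*m2 + (α*b3+β*c3)*m3)
      = (α*b1+β*c1)^2 + (α*b2+β*c2)^2 + (α*b3+β*c3)^2 := by
    linear_combination α*hmb + β*hmc - hdd
  -- the plane and circle data
  set W : Submodule ℝ (Quaternion ℝ) := Submodule.span ℝ (Set.range ![B - A, C - A]) with hW
  set mq : Quaternion ℝ := p • (B - A) + q • (C - A) with hmq
  set c0 : Quaternion ℝ := mq + A with hc0
  have hli : LinearIndependent ℝ ![B - A, C - A] := by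
    rw [LinearIndependent.pair_iff]
    intro s t hst
    have E1 : s*b1 + t*c1 = 0 := by
      have h := congrArg QuaternionAlgebra.imI hst
      simp only [Quaternion.imI_add, Quaternion.imI_smul, Quaternion.imI_sub,
        Quaternion.imI_zero, smul_eq_mul] at h
      linear_combination h - s*hb1 - t*hc1
    have E2 : s*b2 + t*c2 = 0 := by
      have h := congrArg QuaternionAlgebra.imJ hst
      simp only [Quaternion.imJ_add, Quaternion.imJ_smul, Quaternion.imJ_sub,
        Quaternion.imJ_zero, smul_eq_mul] at h
      linear_combination h - s*hb2 - t*hc2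
    have E3 : s*b3 + t*c3 = 0 := by
      have h := congrArg QuaternionAlgebra.imK hst
      simp only [Quaternion.imK_add, Quaternion.imK_smul, Quaternion.imK_sub,
        Quaternion.imK_zero, smul_eq_mul] at h
      linear_combination h - s*hb3 - t*hc3
    constructor
    · have hs : s * ((b2*c3 - b3*c2)^2 + (b3*c1 - b1*c3)^2 + (b1*c2 - b2*c1)^2) = 0 := by
        linear_combination ((b2*c3-b3*c2)*c3)*E2 - ((b2*c3-b3*c2)*c2)*E3
          + ((b3*c1-b1*c3)*c1)*E3 - ((b3*c1-b1*c3)*c3)*E1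
          + ((b1*c2-b2*c1)*c2)*E1 - ((b1*c2-b2*c1)*c1)*E2
      exact (mul_eq_zero.mp hs).resolve_right hn
    · have ht : t * ((b2*c3 - b3*c2)^2 + (b3*c1 - b1*c3)^2 + (b1*c2 - b2*c1)^2) = 0 := by
        linear_combination ((b2*c3-b3*c2)*b2)*E3 - ((b2*c3-b3*c2)*b3)*E2
          + ((b3*c1-b1*c3)*b3)*E1 - ((b3*c1-b1*c3)*b1)*E3
          + ((b1*c2-b2*c1)*b1)*E2 - ((b1*c2-b2*c1)*b2)*E1
      exact (mul_eq_zero.mp ht).resolve_right hn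
  have hBA_W : B - A ∈ W := Submodule.subset_span ⟨0, rfl⟩
  have hCA_W : C - A ∈ W := Submodule.subset_span ⟨1, rfl⟩
  have hcombD : D - A = α • (B - A) + β • (C - A) := by
    apply Quaternion.ext
    · simp [hA, hB, hC, hD]
    · simp only [Quaternion.imI_add, Quaternion.imI_smul, Quaternion.imI_sub, smul_eq_mul]
      linear_combination hD1 - α*hb1 - β*hc1
    · simp only [Quaternion.imJ_add, Quaternion.imJ_smul, Quaternion.imJ_sub, smul_eq_mul]
      linear_combination hD2 - α*hb2 - β*hc2
    · simp only [Quaternion.imK_add, Quaternion.imK_smul, Quaternion.imK_sub, smul_eq_mul]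
      linear_combination hD3 - α*hb3 - β*hc3
  have hDA_W : D - A ∈ W := by
    rw [hcombD]
    exact Submodule.add_mem _ (Submodule.smul_mem _ _ hBA_W) (Submodule.smul_mem _ _ hCA_W)
  have hmq_W : mq ∈ W :=
    Submodule.add_mem _ (Submodule.smul_mem _ _ hBA_W) (Submodule.smul_mem _ _ hCA_W)
  have emre : mq.re = 0 := by simp [hmq, hA, hB, hC]
  have em1 : mq.imI = m1 := by
    simp only [hmq, Quaternion.imI_add, Quaternion.imI_smul, Quaternion.imI_sub, smul_eq_mul]
    linear_combination p*hb1 + q*hc1 - hm1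
  have em2 : mq.imJ = m2 := by
    simp only [hmq, Quaternion.imJ_add, Quaternion.imJ_smul, Quaternion.imJ_sub, smul_eq_mul]
    linear_combination p*hb2 + q*hc2 - hm2
  have em3 : mq.imK = m3 := by
    simp only [hmq, Quaternion.imK_add, Quaternion.imK_smul, Quaternion.imK_sub, smul_eq_mul]
    linear_combination p*hb3 + q*hc3 - hm3
  have distAc0 : ∀ X : Quaternion ℝ, normSq (X - c0) = normSq (A - c0) → dist X c0 = dist A c0 := by
    intro X h
    rw [dist_eq_norm, dist_eq_norm]
    refine (mul_self_inj (norm_nonneg _) (norm_nonneg _)).mp ?_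
    rw [← Quaternion.normSq_eq_norm_mul_self, ← Quaternion.normSq_eq_norm_mul_self, h]
  have eA : A - c0 = -mq := by rw [hc0]; abel
  have eB : B - c0 = (B - A) - mq := by rw [hc0]; abel
  have eC : C - c0 = (C - A) - mq := by rw [hc0]; abel
  have eD : D - c0 = (D - A) - mq := by rw [hc0]; abel
  have dB : dist B c0 = dist A c0 := by
    apply distAc0
    rw [eB, eA, Quaternion.normSq_def', Quaternion.normSq_def']
    simp only [Quaternion.re_sub, Quaternion.imI_sub, Quaternion.imJ_sub, Quaternion.imK_sub,
      Quaternion.re_neg, Quaternion.imI_neg, Quaternion.imJ_neg, Quaternion.imK_neg,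
      emre, em1, em2, em3, hA, hB]
    rw [hb1, hb2, hb3]
    linear_combination -hmb
  have dC : dist C c0 = dist A c0 := by
    apply distAc0
    rw [eC, eA, Quaternion.normSq_def', Quaternion.normSq_def']
    simp only [Quaternion.re_sub, Quaternion.imI_sub, Quaternion.imJ_sub, Quaternion.imK_sub,
      Quaternion.re_neg, Quaternion.imI_neg, Quaternion.imJ_neg, Quaternion.imK_neg,
      emre, em1, em2, em3, hA, hC]
    rw [hc1, hc2, hc3]
    linear_combination -hmc
  have dD : dist D c0 = dist A c0 := by
    apply distAc0
    rw [eD, eA, Quaternion.normSq_def', Quaternion.normSq_def']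
    simp only [Quaternion.re_sub, Quaternion.imI_sub, Quaternion.imJ_sub, Quaternion.imK_sub,
      Quaternion.re_neg, Quaternion.imI_neg, Quaternion.imJ_neg, Quaternion.imK_neg,
      emre, em1, em2, em3, hA, hD]
    rw [hD1, hD2, hD3]
    linear_combination -hmd
  have hAne : A ≠ c0 := by
    intro h
    have h0 : mq = 0 := by
      rw [hc0] at h
      exact right_eq_add.mp h
    have hm10 : m1 = 0 := by rw [← em1, h0]; simp
    have hm20 : m2 = 0 := by rw [← em2, h0]; simp
    have hm30 : m3 = 0 := by rw [← em3, h0]; simp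
    rw [hm10, hm20, hm30] at hmb
    have hbb : b1^2 + b2^2 + b3^2 = 0 := by linarith
    obtain ⟨e1, e2, e3⟩ := sq3_zero hbb
    apply hn
    rw [e1, e2, e3]; ring
  have hρ : 0 < dist A c0 := dist_pos.mpr hAne
  refine ⟨AffineSubspace.mk' A W, c0, dist A c0, ?_, AffineSubspace.self_mem_mk' _ _,
    ?_, ?_, ?_, ?_, hρ, rfl, dB, dC, dD⟩
  · rw [AffineSubspace.direction_mk', hW, finrank_span_eq_card hli]
    simp
  · have hBv : B = (B - A) +ᵥ A := by simp [vadd_eq_add]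
    rw [hBv]; exact AffineSubspace.vadd_mem_mk' _ hBA_W
  · have hCv : C = (C - A) +ᵥ A := by simp [vadd_eq_add]
    rw [hCv]; exact AffineSubspace.vadd_mem_mk' _ hCA_W
  · have hDv : D = (D - A) +ᵥ A := by simp [vadd_eq_add]
    rw [hDv]; exact AffineSubspace.vadd_mem_mk' _ hDA_W
  · have hcv : c0 = mq +ᵥ A := by rw [hc0]; rfl
    rw [hcv]; exact AffineSubspace.vadd_mem_mk' _ hmq_W

set_option maxHeartbeats 2000000 in
/-- For four pairwise distinct purely imaginary quaternions, the quaternionic cross ratio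
`Q = (A−B)(B−C)⁻¹(C−D)(D−A)⁻¹` is a real scalar (zero imaginary part) iff the four points are
collinear or lie on a common circle (contained in a 2-dimensional affine subspace, equidistant
from a center in it). -/
theorem stmt_14 (A B C D : Quaternion ℝ)
    (hA : A.re = 0) (hB : B.re = 0) (hC : C.re = 0) (hD : D.re = 0)
    (hAB : A ≠ B) (hAC : A ≠ C) (hAD : A ≠ D) (hBC : B ≠ C) (hBD : B ≠ D) (hCD : C ≠ D) :
    (((A - B) * (B - C)⁻¹ * (C - D) * (D - A)⁻¹).imI = 0 ∧
        ((A - B) * (B - C)⁻¹ * (C - D) * (D - A)⁻¹).imJ = 0 ∧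
        ((A - B) * (B - C)⁻¹ * (C - D) * (D - A)⁻¹).imK = 0) ↔
      (Collinear ℝ ({A, B, C, D} : Set (Quaternion ℝ)) ∨
        ∃ (P : AffineSubspace ℝ (Quaternion ℝ)) (c : Quaternion ℝ) (ρ : ℝ),
          Module.finrank ℝ P.direction = 2 ∧
          A ∈ P ∧ B ∈ P ∧ C ∈ P ∧ D ∈ P ∧ c ∈ P ∧ 0 < ρ ∧
          dist A c = ρ ∧ dist B c = ρ ∧ dist C c = ρ ∧ dist D c = ρ) := by
  obtain ⟨b1, hb1⟩ : ∃ x : ℝ, B.imI - A.imI = x := ⟨_, rfl⟩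
  obtain ⟨b2, hb2⟩ : ∃ x : ℝ, B.imJ - A.imJ = x := ⟨_, rfl⟩
  obtain ⟨b3, hb3⟩ : ∃ x : ℝ, B.imK - A.imK = x := ⟨_, rfl⟩
  obtain ⟨c1, hc1⟩ : ∃ x : ℝ, C.imI - A.imI = x := ⟨_, rfl⟩
  obtain ⟨c2, hc2⟩ : ∃ x : ℝ, C.imJ - A.imJ = x := ⟨_, rfl⟩
  obtain ⟨c3, hc3⟩ : ∃ x : ℝ, C.imK - A.imK = x := ⟨_, rfl⟩
  obtain ⟨d1, hd1⟩ : ∃ x : ℝ, D.imI - A.imI = x := ⟨_, rfl⟩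
  obtain ⟨d2, hd2⟩ : ∃ x : ℝ, D.imJ - A.imJ = x := ⟨_, rfl⟩
  obtain ⟨d3, hd3⟩ : ∃ x : ℝ, D.imK - A.imK = x := ⟨_, rfl⟩
  -- Step A : reduce the cross-ratio condition to a polynomial condition
  have hBC0 : B - C ≠ 0 := sub_ne_zero.mpr hBC
  have hDA0 : D - A ≠ 0 := sub_ne_zero.mpr (Ne.symm hAD)
  have hn1 : 0 < normSq (B - C) :=
    lt_of_le_of_ne normSq_nonneg (Ne.symm (normSq_ne_zero.mpr hBC0))
  have hn2 : 0 < normSq (D - A) :=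
    lt_of_le_of_ne normSq_nonneg (Ne.symm (normSq_ne_zero.mpr hDA0))
  have hsmul : (A - B) * (B - C)⁻¹ * (C - D) * (D - A)⁻¹
      = ((normSq (B - C))⁻¹ * (normSq (D - A))⁻¹) •
        ((A - B) * star (B - C) * (C - D) * star (D - A)) := by
    rw [Quaternion.inv_def, Quaternion.inv_def]
    simp only [mul_smul_comm, smul_mul_assoc, smul_smul]
    rw [mul_comm]
  have hposinv : 0 < (normSq (B - C))⁻¹ * (normSq (D - A))⁻¹ :=
    mul_pos (inv_pos.mpr hn1) (inv_pos.mpr hn2)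
  have hzero : ∀ x : ℝ, ((normSq (B - C))⁻¹ * (normSq (D - A))⁻¹) * x = 0 ↔ x = 0 := by
    intro x
    constructor
    · intro h
      rcases mul_eq_zero.mp h with h | h
      · exact absurd h (ne_of_gt hposinv)
      · exact h
    · intro h; rw [h, mul_zero]
  have hNI : ((A - B) * star (B - C) * (C - D) * star (D - A)).imI
      = (b1^2+b2^2+b3^2)*(c2*d3 - c3*d2) + (c1^2+c2^2+c3^2)*(d2*b3 - d3*b2)
        + (d1^2+d2^2+d3^2)*(b2*c3 - b3*c2) := by
    rw [← hb1, ← hb2, ← hb3, ← hc1, ← hc2, ← hc3, ← hd1, ← hd2, ← hd3]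
    simp only [Quaternion.imI_mul, Quaternion.re_mul, Quaternion.imJ_mul, Quaternion.imK_mul,
      Quaternion.re_star, Quaternion.imI_star, Quaternion.imJ_star, Quaternion.imK_star,
      Quaternion.re_sub, Quaternion.imI_sub, Quaternion.imJ_sub, Quaternion.imK_sub,
      hA, hB, hC, hD]
    ring
  have hNJ : ((A - B) * star (B - C) * (C - D) * star (D - A)).imJ
      = (b1^2+b2^2+b3^2)*(c3*d1 - c1*d3) + (c1^2+c2^2+c3^2)*(d3*b1 - d1*b3)
        + (d1^2+d2^2+d3^2)*(b3*c1 - b1*c3) := by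
    rw [← hb1, ← hb2, ← hb3, ← hc1, ← hc2, ← hc3, ← hd1, ← hd2, ← hd3]
    simp only [Quaternion.imI_mul, Quaternion.re_mul, Quaternion.imJ_mul, Quaternion.imK_mul,
      Quaternion.re_star, Quaternion.imI_star, Quaternion.imJ_star, Quaternion.imK_star,
      Quaternion.re_sub, Quaternion.imI_sub, Quaternion.imJ_sub, Quaternion.imK_sub,
      hA, hB, hC, hD]
    ring
  have hNK : ((A - B) * star (B - C) * (C - D) * star (D - A)).imK
      = (b1^2+b2^2+b3^2)*(c1*d2 - c2*d1) + (c1^2+c2^2+c3^2)*(d1*b2 - d2*b1)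
        + (d1^2+d2^2+d3^2)*(b1*c2 - b2*c1) := by
    rw [← hb1, ← hb2, ← hb3, ← hc1, ← hc2, ← hc3, ← hd1, ← hd2, ← hd3]
    simp only [Quaternion.imI_mul, Quaternion.re_mul, Quaternion.imJ_mul, Quaternion.imK_mul,
      Quaternion.re_star, Quaternion.imI_star, Quaternion.imJ_star, Quaternion.imK_star,
      Quaternion.re_sub, Quaternion.imI_sub, Quaternion.imJ_sub, Quaternion.imK_sub,
      hA, hB, hC, hD]
    ring
  have stepA : (((A - B) * (B - C)⁻¹ * (C - D) * (D - A)⁻¹).imI = 0 ∧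
        ((A - B) * (B - C)⁻¹ * (C - D) * (D - A)⁻¹).imJ = 0 ∧
        ((A - B) * (B - C)⁻¹ * (C - D) * (D - A)⁻¹).imK = 0) ↔
      ((b1^2+b2^2+b3^2)*(c2*d3 - c3*d2) + (c1^2+c2^2+c3^2)*(d2*b3 - d3*b2)
          + (d1^2+d2^2+d3^2)*(b2*c3 - b3*c2) = 0 ∧
        (b1^2+b2^2+b3^2)*(c3*d1 - c1*d3) + (c1^2+c2^2+c3^2)*(d3*b1 - d1*b3)
          + (d1^2+d2^2+d3^2)*(b3*c1 - b1*c3) = 0 ∧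
        (b1^2+b2^2+b3^2)*(c1*d2 - c2*d1) + (c1^2+c2^2+c3^2)*(d1*b2 - d2*b1)
          + (d1^2+d2^2+d3^2)*(b1*c2 - b2*c1) = 0) := by
    rw [hsmul]
    simp only [Quaternion.imI_smul, Quaternion.imJ_smul, Quaternion.imK_smul, smul_eq_mul]
    rw [hzero, hzero, hzero, hNI, hNJ, hNK]
  rw [stepA]
  -- nonzero lengths
  have hbb : b1^2 + b2^2 + b3^2 ≠ 0 := by
    intro h
    obtain ⟨e1, e2, e3⟩ := sq3_zero h
    apply hAB
    apply Quaternion.ext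
    · rw [hA, hB]
    · linear_combination -hb1 - e1
    · linear_combination -hb2 - e2
    · linear_combination -hb3 - e3
  constructor
  · rintro ⟨h1, h2, h3⟩
    have hdetz : (b1^2+b2^2+b3^2) * (b1*(c2*d3 - c3*d2) + b2*(c3*d1 - c1*d3) + b3*(c1*d2 - c2*d1)) = 0 := by
      linear_combination b1*h1 + b2*h2 + b3*h3
    have hdet : b1*(c2*d3 - c3*d2) + b2*(c3*d1 - c1*d3) + b3*(c1*d2 - c2*d1) = 0 :=
      (mul_eq_zero.mp hdetz).resolve_left hbb
    by_cases hbc : b2*c3 - b3*c2 = 0 ∧ b3*c1 - b1*c3 = 0 ∧ b1*c2 - b2*c1 = 0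
    · by_cases hbd : b2*d3 - b3*d2 = 0 ∧ b3*d1 - b1*d3 = 0 ∧ b1*d2 - b2*d1 = 0
      · -- collinear case
        left
        obtain ⟨hx1, hx2, hx3⟩ := hbc
        obtain ⟨hy1, hy2, hy3⟩ := hbd
        rw [collinear_iff_of_mem (Set.mem_insert A {B, C, D})]
        refine ⟨B - A, fun pt hpt => ?_⟩
        simp only [Set.mem_insert_iff, Set.mem_singleton_iff] at hpt
        rcases hpt with rfl | rfl | rfl | rfl
        · exact ⟨0, by simp⟩
        · exact ⟨1, by simp⟩
        · refine ⟨(b1*c1+b2*c2+b3*c3)/(b1^2+b2^2+b3^2), ?_⟩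
          have hC1 : c1*(b1^2+b2^2+b3^2) = (b1*c1+b2*c2+b3*c3)*b1 := by
            linear_combination b3*hx2 - b2*hx3
          have hC2 : c2*(b1^2+b2^2+b3^2) = (b1*c1+b2*c2+b3*c3)*b2 := by
            linear_combination b1*hx3 - b3*hx1
          have hC3 : c3*(b1^2+b2^2+b3^2) = (b1*c1+b2*c2+b3*c3)*b3 := by
            linear_combination b2*hx1 - b1*hx2
          apply Quaternion.ext
          · simp only [vadd_eq_add, Quaternion.re_add, Quaternion.re_smul, Quaternion.re_sub,
              smul_eq_mul, hA, hB, hC]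
            ring
          · simp only [vadd_eq_add, Quaternion.imI_add, Quaternion.imI_smul, Quaternion.imI_sub,
              smul_eq_mul]
            field_simp
            linear_combination hC1 - (b1*c1+b2*c2+b3*c3)*hb1 + (b1^2+b2^2+b3^2)*hc1
          · simp only [vadd_eq_add, Quaternion.imJ_add, Quaternion.imJ_smul, Quaternion.imJ_sub,
              smul_eq_mul]
            field_simp
            linear_combination hC2 - (b1*c1+b2*c2+b3*c3)*hb2 + (b1^2+b2^2+b3^2)*hc2
          · simp only [vadd_eq_add, Quaternion.imK_add, Quaternion.imK_smul, Quaternion.imK_sub,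
              smul_eq_mul]
            field_simp
            linear_combination hC3 - (b1*c1+b2*c2+b3*c3)*hb3 + (b1^2+b2^2+b3^2)*hc3
        · refine ⟨(b1*d1+b2*d2+b3*d3)/(b1^2+b2^2+b3^2), ?_⟩
          have hC1 : d1*(b1^2+b2^2+b3^2) = (b1*d1+b2*d2+b3*d3)*b1 := by
            linear_combination b3*hy2 - b2*hy3
          have hC2 : d2*(b1^2+b2^2+b3^2) = (b1*d1+b2*d2+b3*d3)*b2 := by
            linear_combination b1*hy3 - b3*hy1
          have hC3 : d3*(b1^2+b2^2+b3^2) = (b1*d1+b2*d2+b3*d3)*b3 := by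
            linear_combination b2*hy1 - b1*hy2
          apply Quaternion.ext
          · simp only [vadd_eq_add, Quaternion.re_add, Quaternion.re_smul, Quaternion.re_sub,
              smul_eq_mul, hA, hB, hD]
            ring
          · simp only [vadd_eq_add, Quaternion.imI_add, Quaternion.imI_smul, Quaternion.imI_sub,
              smul_eq_mul]
            field_simp
            linear_combination hC1 - (b1*d1+b2*d2+b3*d3)*hb1 + (b1^2+b2^2+b3^2)*hd1
          · simp only [vadd_eq_add, Quaternion.imJ_add, Quaternion.imJ_smul, Quaternion.imJ_sub,
              smul_eq_mul]
            field_simp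
            linear_combination hC2 - (b1*d1+b2*d2+b3*d3)*hb2 + (b1^2+b2^2+b3^2)*hd2
          · simp only [vadd_eq_add, Quaternion.imK_add, Quaternion.imK_smul, Quaternion.imK_sub,
              smul_eq_mul]
            field_simp
            linear_combination hC3 - (b1*d1+b2*d2+b3*d3)*hb3 + (b1^2+b2^2+b3^2)*hd3
      · -- circle through A, B, D, C  (pair (B-A, D-A) independent)
        right
        have hn' : (b2*d3 - b3*d2)^2 + (b3*d1 - b1*d3)^2 + (b1*d2 - b2*d1)^2 ≠ 0 := by
          intro h
          exact hbd (sq3_zero h)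
        have hdet' : b1*(d2*c3 - d3*c2) + b2*(d3*c1 - d1*c3) + b3*(d1*c2 - d2*c1) = 0 := by
          linear_combination -hdet
        have h1' : (b1^2+b2^2+b3^2)*(d2*c3 - d3*c2) + (d1^2+d2^2+d3^2)*(c2*b3 - c3*b2)
            + (c1^2+c2^2+c3^2)*(b2*d3 - b3*d2) = 0 := by
          linear_combination -h1
        have h2' : (b1^2+b2^2+b3^2)*(d3*c1 - d1*c3) + (d1^2+d2^2+d3^2)*(c3*b1 - c1*b3)
            + (c1^2+c2^2+c3^2)*(b3*d1 - b1*d3) = 0 := by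
          linear_combination -h2
        have h3' : (b1^2+b2^2+b3^2)*(d1*c2 - d2*c1) + (d1^2+d2^2+d3^2)*(c1*b2 - c2*b1)
            + (c1^2+c2^2+c3^2)*(b1*d2 - b2*d1) = 0 := by
          linear_combination -h3
        obtain ⟨P, c0, ρ, hfin, hAP, hBP, hDP, hCP, hc0P, hρ, dA', dB', dD', dC'⟩ :=
          aux_circle A B D C b1 b2 b3 d1 d2 d3 c1 c2 c3 hA hB hD hC
            hb1 hb2 hb3 hd1 hd2 hd3 hc1 hc2 hc3 hn' hdet' h1' h2' h3'
        exact ⟨P, c0, ρ, hfin, hAP, hBP, hCP, hDP, hc0P, hρ, dA', dB', dC', dD'⟩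
    · -- circle through A, B, C, D (pair (B-A, C-A) independent)
      right
      have hn' : (b2*c3 - b3*c2)^2 + (b3*c1 - b1*c3)^2 + (b1*c2 - b2*c1)^2 ≠ 0 := by
        intro h
        exact hbc (sq3_zero h)
      exact aux_circle A B C D b1 b2 b3 c1 c2 c3 d1 d2 d3 hA hB hC hD
        hb1 hb2 hb3 hc1 hc2 hc3 hd1 hd2 hd3 hn' hdet h1 h2 h3
  · rintro (hcol | ⟨P, c0, ρ, hfin, hAP, hBP, hCP, hDP, hc0P, hρ, dA', dB', dC', dD'⟩)
    · -- collinear implies the polynomial conditions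
      obtain ⟨v, hv⟩ := (collinear_iff_of_mem (Set.mem_insert A {B, C, D})).mp hcol
      obtain ⟨rB, hrB⟩ := hv B (by simp)
      obtain ⟨rC, hrC⟩ := hv C (by simp)
      obtain ⟨rD, hrD⟩ := hv D (by simp)
      have u1 : b1 = rB * v.imI := by
        rw [← hb1, hrB]; simp [vadd_eq_add]
      have u2 : b2 = rB * v.imJ := by
        rw [← hb2, hrB]; simp [vadd_eq_add]
      have u3 : b3 = rB * v.imK := by
        rw [← hb3, hrB]; simp [vadd_eq_add]
      have u4 : c1 = rC * v.imI := by
        rw [← hc1, hrC]; simp [vadd_eq_add]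
      have u5 : c2 = rC * v.imJ := by
        rw [← hc2, hrC]; simp [vadd_eq_add]
      have u6 : c3 = rC * v.imK := by
        rw [← hc3, hrC]; simp [vadd_eq_add]
      have u7 : d1 = rD * v.imI := by
        rw [← hd1, hrD]; simp [vadd_eq_add]
      have u8 : d2 = rD * v.imJ := by
        rw [← hd2, hrD]; simp [vadd_eq_add]
      have u9 : d3 = rD * v.imK := by
        rw [← hd3, hrD]; simp [vadd_eq_add]
      refine ⟨?_, ?_, ?_⟩ <;> (rw [u1, u2, u3, u4, u5, u6, u7, u8, u9]; ring)
    · -- concyclic implies the polynomial conditions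
      obtain ⟨μ1, hμ1⟩ : ∃ x : ℝ, c0.imI - A.imI = x := ⟨_, rfl⟩
      obtain ⟨μ2, hμ2⟩ : ∃ x : ℝ, c0.imJ - A.imJ = x := ⟨_, rfl⟩
      obtain ⟨μ3, hμ3⟩ : ∃ x : ℝ, c0.imK - A.imK = x := ⟨_, rfl⟩
      -- distance conditions give the center equations
      have hdists : ∀ X : Quaternion ℝ, X.re = 0 → dist X c0 = ρ →
          (X.imI - A.imI)^2 + (X.imJ - A.imJ)^2 + (X.imK - A.imK)^2
            = 2*((X.imI - A.imI)*μ1 + (X.imJ - A.imJ)*μ2 + (X.imK - A.imK)*μ3) := by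
        intro X hXre hdX
        have hnorm : normSq (X - c0) = normSq (A - c0) := by
          rw [Quaternion.normSq_eq_norm_mul_self, Quaternion.normSq_eq_norm_mul_self,
            ← dist_eq_norm, ← dist_eq_norm, hdX, dA']
        rw [Quaternion.normSq_def', Quaternion.normSq_def'] at hnorm
        simp only [Quaternion.re_sub, Quaternion.imI_sub, Quaternion.imJ_sub, Quaternion.imK_sub,
          hXre, hA] at hnorm
        linear_combination hnorm + 2*(X.imI - A.imI)*hμ1 + 2*(X.imJ - A.imJ)*hμ2
          + 2*(X.imK - A.imK)*hμ3
      have HB := hdists B hB dB'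
      have HC := hdists C hC dC'
      have HD := hdists D hD dD'
      rw [hb1, hb2, hb3] at HB
      rw [hc1, hc2, hc3] at HC
      rw [hd1, hd2, hd3] at HD
      -- linear dependence of the three difference vectors
      have hBd : B - A ∈ P.direction := by
        simpa [vsub_eq_sub] using AffineSubspace.vsub_mem_direction hBP hAP
      have hCd : C - A ∈ P.direction := by
        simpa [vsub_eq_sub] using AffineSubspace.vsub_mem_direction hCP hAP
      have hDd : D - A ∈ P.direction := by
        simpa [vsub_eq_sub] using AffineSubspace.vsub_mem_direction hDP hAP
      have hnli : ¬ LinearIndependent ℝ ![B - A, C - A, D - A] := by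
        intro hli
        have hf : LinearIndependent ℝ
            (fun i => (![⟨B - A, hBd⟩, ⟨C - A, hCd⟩, ⟨D - A, hDd⟩] : Fin 3 → P.direction) i) := by
          apply LinearIndependent.of_comp P.direction.subtype
          have heq : (P.direction.subtype ∘ fun i =>
              (![⟨B - A, hBd⟩, ⟨C - A, hCd⟩, ⟨D - A, hDd⟩] : Fin 3 → P.direction) i)
              = ![B - A, C - A, D - A] := by
            funext i; fin_cases i <;> rfl
          rw [heq]; exact hli
        have h3 := hf.fintype_card_le_finrank
        rw [hfin] at h3
        simp at h3
      obtain ⟨g, hg, i, hgi⟩ := Fintype.not_linearIndependent_iff.mp hnli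
      rw [Fin.sum_univ_three] at hg
      simp only [Matrix.cons_val_zero, Matrix.cons_val_one, Matrix.head_cons,
        Matrix.cons_val_two, Matrix.tail_cons] at hg
      have E1 : g 0 * b1 + g 1 * c1 + g 2 * d1 = 0 := by
        have h := congrArg QuaternionAlgebra.imI hg
        simp only [Quaternion.imI_add, Quaternion.imI_smul, Quaternion.imI_sub,
          Quaternion.imI_zero, smul_eq_mul] at h
        linear_combination h - g 0 * hb1 - g 1 * hc1 - g 2 * hd1
      have E2 : g 0 * b2 + g 1 * c2 + g 2 * d2 = 0 := by
        have h := congrArg QuaternionAlgebra.imJ hg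
        simp only [Quaternion.imJ_add, Quaternion.imJ_smul, Quaternion.imJ_sub,
          Quaternion.imJ_zero, smul_eq_mul] at h
        linear_combination h - g 0 * hb2 - g 1 * hc2 - g 2 * hd2
      have E3 : g 0 * b3 + g 1 * c3 + g 2 * d3 = 0 := by
        have h := congrArg QuaternionAlgebra.imK hg
        simp only [Quaternion.imK_add, Quaternion.imK_smul, Quaternion.imK_sub,
          Quaternion.imK_zero, smul_eq_mul] at h
        linear_combination h - g 0 * hb3 - g 1 * hc3 - g 2 * hd3
      have hdet : b1*(c2*d3 - c3*d2) + b2*(c3*d1 - c1*d3) + b3*(c1*d2 - c2*d1) = 0 := by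
        fin_cases i
        · have h0 : g 0 * (b1*(c2*d3 - c3*d2) + b2*(c3*d1 - c1*d3) + b3*(c1*d2 - c2*d1)) = 0 := by
            linear_combination (c2*d3 - c3*d2)*E1 + (c3*d1 - c1*d3)*E2 + (c1*d2 - c2*d1)*E3
          exact (mul_eq_zero.mp h0).resolve_left hgi
        · have h0 : g 1 * (b1*(c2*d3 - c3*d2) + b2*(c3*d1 - c1*d3) + b3*(c1*d2 - c2*d1)) = 0 := by
            linear_combination (d2*b3 - d3*b2)*E1 + (d3*b1 - d1*b3)*E2 + (d1*b2 - d2*b1)*E3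
          exact (mul_eq_zero.mp h0).resolve_left hgi
        · have h0 : g 2 * (b1*(c2*d3 - c3*d2) + b2*(c3*d1 - c1*d3) + b3*(c1*d2 - c2*d1)) = 0 := by
            linear_combination (b2*c3 - b3*c2)*E1 + (b3*c1 - b1*c3)*E2 + (b1*c2 - b2*c1)*E3
          exact (mul_eq_zero.mp h0).resolve_left hgi
      refine ⟨?_, ?_, ?_⟩
      · linear_combination (c2*d3 - c3*d2)*HB + (d2*b3 - d3*b2)*HC + (b2*c3 - b3*c2)*HD
          + 2*μ1*hdet
      · linear_combination (c3*d1 - c1*d3)*HB + (d3*b1 - d1*b3)*HC + (b3*c1 - b1*c3)*HD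
          + 2*μ2*hdet
      · linear_combination (c1*d2 - c2*d1)*HB + (d1*b2 - d2*b1)*HC + (b1*c2 - b2*c1)*HD
          + 2*μ3*hdet
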